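/- VIG-based non-interaction implies non-interaction: Let f : (ℤ₂)ⁿ → ℝ with Walsh transform f̂. If h₁, h₂ ∈ (ℤ₂)ⁿ are such that for every λ with f̂(λ) ≠ 0, either ones(λ) ∩ ones(h₁) = ∅ or ones(λ) ∩ ones(h₂) = ∅, then h₁ and h₂ are non-interacting for f: f(x + h₁ + h₂) − f(x) = (f(x+h₁) − f(x)) + (f(x+h₂) − f(x)) for all x ∈ (ℤ₂)ⁿ. -/

import Mathlib

/-- Walsh (Fourier) transform of `f : (ℤ₂)ⁿ → ℝ`. -/
def walshTransform {n : ℕ} (f : (Fin n → ZMod 2) → ℝ) (lam : Fin n → ZMod 2) : ℝ :=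
  ∑ x : Fin n → ZMod 2, f x * ∏ i : Fin n, (-1 : ℝ) ^ ((lam i).val * (x i).val)

/-- The set of positions where a binary string is 1. -/
def ones {n : ℕ} (v : Fin n → ZMod 2) : Finset (Fin n) :=
  Finset.univ.filter (fun i => v i = 1)

noncomputable def chi (a : ZMod 2) : ℝ := if a = 0 then 1 else -1

lemma zmod2_cases (a : ZMod 2) : a = 0 ∨ a = 1 := by revert a; decide

lemma zmod2_add_eq_zero {a b : ZMod 2} (h : a + b = 0) : a = b := by
  rcases zmod2_cases a with ha | ha <;> rcases zmod2_cases b with hb | hb <;> simp_all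

lemma chi_add (a b : ZMod 2) : chi (a + b) = chi a * chi b := by
  rcases zmod2_cases a with ha | ha <;> rcases zmod2_cases b with hb | hb <;>
    subst ha <;> subst hb <;>
    simp [chi, show (1 : ZMod 2) + 1 = 0 from by decide,
      show (1 : ZMod 2) ≠ 0 from by decide]

lemma pow_eq_chi (a b : ZMod 2) : (-1 : ℝ) ^ (a.val * b.val) = chi (a * b) := by
  rcases zmod2_cases a with ha | ha <;> rcases zmod2_cases b with hb | hb <;>
    subst ha <;> subst hb <;>
    norm_num [chi, ZMod.val_zero, ZMod.val_one]

noncomputable def phi {n : ℕ} (lam x : Fin n → ZMod 2) : ℝ :=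
  ∏ i : Fin n, chi (lam i * x i)

lemma walsh_eq {n : ℕ} (f : (Fin n → ZMod 2) → ℝ) (lam : Fin n → ZMod 2) :
    walshTransform f lam = ∑ x : Fin n → ZMod 2, f x * phi lam x := by
  unfold walshTransform phi
  congr 1; ext x; congr 1; exact Finset.prod_congr rfl fun i _ => pow_eq_chi _ _

lemma phi_add {n : ℕ} (lam x y : Fin n → ZMod 2) :
    phi lam (x + y) = phi lam x * phi lam y := by
  unfold phi
  rw [← Finset.prod_mul_distrib]
  refine Finset.prod_congr rfl fun i _ => ?_
  have : lam i * (x i + y i) = lam i * x i + lam i * y i := by ring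
  rw [Pi.add_apply, this, chi_add]

lemma sum_phi {n : ℕ} (z : Fin n → ZMod 2) :
    ∑ lam : Fin n → ZMod 2, phi lam z = if z = 0 then (2 : ℝ) ^ n else 0 := by
  unfold phi
  rw [← Fintype.prod_sum (fun i b => chi (b * z i))]
  by_cases hz : z = 0
  · subst hz
    simp [chi]
  · obtain ⟨i, hi⟩ := Function.ne_iff.mp hz
    rw [if_neg hz]
    apply Finset.prod_eq_zero (Finset.mem_univ i)
    have hzi : z i = 1 := by
      rcases zmod2_cases (z i) with h | h
      · exact absurd (by simpa using h) hi
      · exact h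
    rw [hzi]
    have h1 : ∀ b : ZMod 2, chi (b * 1) = chi b := by intro b; rw [mul_one]
    simp only [h1]
    rw [show (Finset.univ : Finset (ZMod 2)) = {0, 1} from by decide,
      Finset.sum_insert (by decide), Finset.sum_singleton]
    norm_num [chi]

lemma inversion {n : ℕ} (f : (Fin n → ZMod 2) → ℝ) (x : Fin n → ZMod 2) :
    (2 : ℝ) ^ n * f x = ∑ lam : Fin n → ZMod 2, walshTransform f lam * phi lam x := by
  simp only [walsh_eq, Finset.sum_mul]
  rw [Finset.sum_comm]
  have : ∀ y : Fin n → ZMod 2,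
      ∑ lam : Fin n → ZMod 2, f y * phi lam y * phi lam x
        = f y * ∑ lam : Fin n → ZMod 2, phi lam (y + x) := by
    intro y
    rw [Finset.mul_sum]
    exact Finset.sum_congr rfl fun lam _ => by rw [phi_add, mul_assoc]
  simp only [this, sum_phi]
  rw [Finset.sum_eq_single x]
  · have : x + x = 0 := by ext i; simp [CharTwo.add_self_eq_zero]
    rw [this, if_pos rfl, mul_comm]
  · intro y _ hy
    have : y + x ≠ 0 := by
      intro h0
      apply hy
      funext i
      have := congrArg (fun v => v i) h0
      exact zmod2_add_eq_zero this
    rw [if_neg this, mul_zero]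
  · intro h; exact absurd (Finset.mem_univ x) h

lemma phi_one {n : ℕ} (lam h : Fin n → ZMod 2) (hd : ones lam ∩ ones h = ∅) :
    phi lam h = 1 := by
  unfold phi
  apply Finset.prod_eq_one
  intro i _
  have : lam i = 0 ∨ h i = 0 := by
    by_contra hc
    push_neg at hc
    have h1 : lam i = 1 := (zmod2_cases (lam i)).resolve_left hc.1
    have h2 : h i = 1 := (zmod2_cases (h i)).resolve_left hc.2
    have : i ∈ ones lam ∩ ones h := by
      simp [ones, Finset.mem_inter, Finset.mem_filter, h1, h2]
    rw [hd] at this; exact absurd this (Finset.notMem_empty i)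
  rcases this with h0 | h0 <;> simp [h0, chi]

theorem stmt_12 {n : ℕ} (f : (Fin n → ZMod 2) → ℝ) (h₁ h₂ : Fin n → ZMod 2)
    (hvig : ∀ lam : Fin n → ZMod 2, walshTransform f lam ≠ 0 →
      ones lam ∩ ones h₁ = ∅ ∨ ones lam ∩ ones h₂ = ∅) :
    ∀ x : Fin n → ZMod 2,
      f (x + h₁ + h₂) - f x = (f (x + h₁) - f x) + (f (x + h₂) - f x) := by
  intro x
  have h2n : (2 : ℝ) ^ n ≠ 0 := by positivity
  have key : (2 : ℝ) ^ n * (f (x + h₁ + h₂) + f x - f (x + h₁) - f (x + h₂)) = 0 := by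
    have e := inversion f
    rw [mul_sub, mul_sub, mul_add, e, e, e, e]
    rw [← Finset.sum_add_distrib, ← Finset.sum_sub_distrib, ← Finset.sum_sub_distrib]
    apply Finset.sum_eq_zero
    intro lam _
    by_cases hW : walshTransform f lam = 0
    · simp [hW]
    · have hph : phi lam h₁ = 1 ∨ phi lam h₂ = 1 := by
        rcases hvig lam hW with h | h
        · exact Or.inl (phi_one _ _ h)
        · exact Or.inr (phi_one _ _ h)
      simp only [phi_add]
      rcases hph with h | h <;> rw [h] <;> ring
  have := mul_eq_zero.mp key
  rcases this with h | h
  · exact absurd h h2n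
  · linarith
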